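/- The group ⊕_p ℤ/pℤ (direct sum over all primes p) is a residually finite group with infinite NCC which has no maximal cyclic subgroups. -/

import Mathlib

open DirectSum

/-- `CC G Φ`: the smallest number of cyclic subgroups of `G` whose `Φ`-orbits cover `G`. -/
noncomputable def CC (G Φ : Type*) [Group G] [Group Φ] [MulDistribMulAction Φ G] : ℕ∞ :=
  sInf {n : ℕ∞ | ∃ s : Finset G, (s.card : ℕ∞) = n ∧
    ∀ x : G, ∃ g ∈ s, ∃ φ : Φ, x ∈ Subgroup.zpowers (φ • g)}

/-- `NCC G`: the smallest number of cyclic subgroups of `G` whose conjugacy classes cover `G`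
(`⊤` if no finite such cover exists). -/
noncomputable def NCC (G : Type*) [Group G] : ℕ∞ := CC G (ConjAct G)


local notation "A" => ⨁ p : Nat.Primes, ZMod (p : ℕ)

-- component of a zpower
lemma comp_zpow (g : Multiplicative A) (n : ℤ) (p : Nat.Primes) :
    (Multiplicative.toAdd (g ^ n)) p = n • (Multiplicative.toAdd g p) := by
  rw [toAdd_zpow]
  exact map_zsmul (DFinsupp.evalAddMonoidHom p) n (Multiplicative.toAdd g)

lemma mem_zpowers_comp_zero {g x : Multiplicative A} (hx : x ∈ Subgroup.zpowers g)
    {p : Nat.Primes} (hp : Multiplicative.toAdd g p = 0) : Multiplicative.toAdd x p = 0 := by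
  obtain ⟨n, rfl⟩ := hx
  rw [comp_zpow, hp, smul_zero]

lemma one_ne_zero_zmod (p : Nat.Primes) : (1 : ZMod (p:ℕ)) ≠ 0 := by
  haveI : Fact (p : ℕ).Prime := ⟨p.2⟩
  exact one_ne_zero

-- part 1
lemma part1 : ∀ g : Multiplicative A, g ≠ 1 →
      ∃ (F : Type) (_ : Group F) (_ : Finite F)
        (f : Multiplicative A →* F), f g ≠ 1 := by
  intro g hg
  have : Multiplicative.toAdd g ≠ 0 := by
    simpa using hg
  obtain ⟨p, hp⟩ : ∃ p, Multiplicative.toAdd g p ≠ 0 := by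
    by_contra h
    push_neg at h
    exact this (DFinsupp.ext h)
  haveI : Fact (p : ℕ).Prime := ⟨p.2⟩
  refine ⟨Multiplicative (ZMod (p:ℕ)), inferInstance, inferInstance,
    AddMonoidHom.toMultiplicative (DFinsupp.evalAddMonoidHom p), ?_⟩
  exact hp

-- conj action trivial
lemma conj_triv (φ : ConjAct (Multiplicative A)) (g : Multiplicative A) : φ • g = g := by
  rw [ConjAct.smul_def, mul_comm, ← mul_assoc, inv_mul_cancel, one_mul]


lemma part2 : NCC (Multiplicative A) = ⊤ := by
  have hempty : {n : ℕ∞ | ∃ s : Finset (Multiplicative A), (s.card : ℕ∞) = n ∧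
      ∀ x : Multiplicative A, ∃ g ∈ s, ∃ φ : ConjAct (Multiplicative A),
        x ∈ Subgroup.zpowers (φ • g)} = ∅ := by
    rw [Set.eq_empty_iff_forall_notMem]
    rintro n ⟨s, -, hcov⟩
    obtain ⟨q, hq⟩ := Infinite.exists_notMem_finset
      (s.biUnion (fun g => (Multiplicative.toAdd g).support))
    obtain ⟨g, hgs, φ, hx⟩ := hcov (Multiplicative.ofAdd (DirectSum.of _ q 1))
    rw [conj_triv] at hx
    have hgq : Multiplicative.toAdd g q = 0 := by
      by_contra h
      exact hq (Finset.mem_biUnion.2 ⟨g, hgs, DFinsupp.mem_support_iff.2 h⟩)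
    have := mem_zpowers_comp_zero hx hgq
    rw [toAdd_ofAdd, DirectSum.of_eq_same] at this
    exact one_ne_zero_zmod q this
  rw [NCC, CC, hempty, sInf_empty]

lemma part3 : ¬ ∃ g : Multiplicative A,
    ∀ h : Multiplicative A,
      Subgroup.zpowers g ≤ Subgroup.zpowers h →
        Subgroup.zpowers h = Subgroup.zpowers g := by
  rintro ⟨g, hmax⟩
  set a := Multiplicative.toAdd g with ha
  obtain ⟨q, hq⟩ := Infinite.exists_notMem_finset a.support
  have hgq : a q = 0 := by
    by_contra h; exact hq (DFinsupp.mem_support_iff.2 h)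
  set e : A := DirectSum.of _ q 1 with he
  set N : ℕ := ∏ p ∈ a.support, (p : ℕ) with hN
  -- N • a = 0
  have hNa : (N : ℤ) • a = 0 := by
    refine DFinsupp.ext fun p => ?_
    have hs : ((N : ℤ) • a) p = (N : ℤ) • (a p) :=
      map_zsmul (DFinsupp.evalAddMonoidHom p) _ a
    rw [hs]
    by_cases hp : p ∈ a.support
    · haveI : Fact (p : ℕ).Prime := ⟨p.2⟩
      have hdvd : ((p : ℕ)) ∣ N := Finset.dvd_prod_of_mem _ hp
      have : ((N : ℤ) : ZMod (p : ℕ)) = 0 := by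
        rw [Int.cast_natCast, ZMod.natCast_eq_zero_iff]
        exact hdvd
      show (N : ℤ) • (a p) = (0 : A) p
      rw [zsmul_eq_mul', DFinsupp.zero_apply, this, mul_zero]
    · have : a p = 0 := by simpa using hp
      show (N : ℤ) • (a p) = (0 : A) p
      rw [this, smul_zero, DFinsupp.zero_apply]
  -- q • e = 0
  have hqe : ((q : ℕ) : ℤ) • e = 0 := by
    refine DFinsupp.ext fun p => ?_
    have hs : (((q : ℕ) : ℤ) • e) p = ((q : ℕ) : ℤ) • (e p) :=
      map_zsmul (DFinsupp.evalAddMonoidHom p) _ e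
    rw [hs]
    show ((q : ℕ) : ℤ) • (e p) = (0 : A) p
    by_cases hp : p = q
    · subst hp
      haveI : NeZero (p : ℕ) := ⟨p.2.ne_zero⟩
      rw [he, DirectSum.of_eq_same, DFinsupp.zero_apply, zsmul_eq_mul',
        Int.cast_natCast, ZMod.natCast_self, one_mul]
    · rw [he, show (DirectSum.of (fun p : Nat.Primes => ZMod (p : ℕ)) q 1) p = 0 from
        DirectSum.of_eq_of_ne _ _ _ hp, smul_zero, DFinsupp.zero_apply]
  -- coprimality
  have hcop : IsCoprime ((q : ℕ) : ℤ) (N : ℤ) := by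
    rw [Nat.isCoprime_iff_coprime]
    rw [Nat.Prime.coprime_iff_not_dvd q.2]
    intro hdvd
    obtain ⟨p, hpS, hpd⟩ := (Nat.Prime.prime q.2).dvd_finset_prod_iff _ |>.1 hdvd
    have : (q : ℕ) = (p : ℕ) := ((Nat.prime_dvd_prime_iff_eq q.2 p.2).1 hpd)
    have : q = p := Subtype.ext this
    exact hq (this ▸ hpS)
  obtain ⟨u, v, huv⟩ := hcop
  set h : Multiplicative A := g * Multiplicative.ofAdd e with hh
  have hgh : g ∈ Subgroup.zpowers h := by
    refine ⟨u * (q : ℕ), ?_⟩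
    apply Multiplicative.toAdd.injective
    have h2 : (u * ((q : ℕ) : ℤ)) • e = 0 := by rw [mul_smul, hqe, smul_zero]
    rw [toAdd_zpow, hh, toAdd_mul, toAdd_ofAdd, smul_add, h2, add_zero, ← ha]
    have h3 : u * ((q : ℕ) : ℤ) = 1 - v * (N : ℤ) := by linarith
    rw [h3, sub_smul, one_smul, mul_smul, hNa, smul_zero, sub_zero]
  have heq := hmax h (Subgroup.zpowers_le.2 hgh)
  have hmem : Multiplicative.ofAdd e ∈ Subgroup.zpowers g := by
    have h1 : h ∈ Subgroup.zpowers g := heq ▸ Subgroup.mem_zpowers h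
    have h2 : g⁻¹ * h ∈ Subgroup.zpowers g :=
      mul_mem (inv_mem (Subgroup.mem_zpowers g)) h1
    rwa [hh, inv_mul_cancel_left] at h2
  have := mem_zpowers_comp_zero hmem hgq
  rw [toAdd_ofAdd, he, DirectSum.of_eq_same] at this
  exact one_ne_zero_zmod q this

/-- The group `⊕_p ℤ/pℤ` (direct sum over all primes, written multiplicatively) is
residually finite, has infinite NCC, and has no maximal cyclic subgroups. -/
theorem stmt_7 :
    (∀ g : Multiplicative (⨁ p : Nat.Primes, ZMod (p : ℕ)), g ≠ 1 →
      ∃ (F : Type) (_ : Group F) (_ : Finite F)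
        (f : Multiplicative (⨁ p : Nat.Primes, ZMod (p : ℕ)) →* F), f g ≠ 1) ∧
    NCC (Multiplicative (⨁ p : Nat.Primes, ZMod (p : ℕ))) = ⊤ ∧
    ¬ ∃ g : Multiplicative (⨁ p : Nat.Primes, ZMod (p : ℕ)),
        ∀ h : Multiplicative (⨁ p : Nat.Primes, ZMod (p : ℕ)),
          Subgroup.zpowers g ≤ Subgroup.zpowers h →
            Subgroup.zpowers h = Subgroup.zpowers g :=
  ⟨part1, part2, part3⟩
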